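/- Assume ε satisfies the composition conditions. Then two quadrilaterals 𝒬_1, 𝒬_2 in F are equal if and only if their distinguished points are equal. -/

import Mathlib

open Finset

/-- The ambient `𝔽₂`-vector space (the Fano cube); the Fano plane `F` is its set of
nonzero vectors. -/
abbrev V : Type := Fin 3 → ZMod 2

/-- A multiplication factor: a sign `ε P Q ∈ {−1,1}` for each ordered pair `(P,Q)` of
distinct points of the Fano plane with `ε Q P = −ε P Q`, normalised to `0` outside its
domain of definition. -/
def IsMulFactor (ε : V → V → ℤ) : Prop :=
  (∀ P Q : V, P ≠ 0 → Q ≠ 0 → P ≠ Q → (ε P Q = 1 ∨ ε P Q = -1) ∧ ε Q P = -ε P Q) ∧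
  (∀ P Q : V, P = 0 ∨ Q = 0 ∨ P = Q → ε P Q = 0)

/-- A norm on the Fano plane: a map to `{−1,1}` multiplicative on pairs of distinct points. -/
def IsNorm (N : V → ℤ) : Prop :=
  (∀ P : V, P ≠ 0 → N P = 1 ∨ N P = -1) ∧
  (∀ P Q : V, P ≠ 0 → Q ≠ 0 → P ≠ Q → N (P + Q) = N P * N Q)

/-- A line of the Fano plane: a 3-element set `{P,Q,R}` of nonzero vectors with `P+Q+R=0`. -/
def IsLine (L : Set V) : Prop :=
  ∃ P Q R : V, P ≠ 0 ∧ Q ≠ 0 ∧ R ≠ 0 ∧ P ≠ Q ∧ P ≠ R ∧ Q ≠ R ∧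
    P + Q + R = 0 ∧ L = {P, Q, R}

/-- A triangle: a 3-element subset of the Fano plane which is not a line. -/
def IsTriangle (T : Set V) : Prop :=
  ∃ P Q R : V, P ≠ 0 ∧ Q ≠ 0 ∧ R ≠ 0 ∧ P ≠ Q ∧ P ≠ R ∧ Q ≠ R ∧
    P + Q + R ≠ 0 ∧ T = {P, Q, R}

/-- A quadrilateral: a 4-element subset of the Fano plane containing no line. -/
def IsQuad (S : Set V) : Prop :=
  (∃ P Q R T : V, P ≠ 0 ∧ Q ≠ 0 ∧ R ≠ 0 ∧ T ≠ 0 ∧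
    P ≠ Q ∧ P ≠ R ∧ P ≠ T ∧ Q ≠ R ∧ Q ≠ T ∧ R ≠ T ∧ S = {P, Q, R, T}) ∧
  (∀ L : Set V, IsLine L → ¬ L ⊆ S)

/-- The future of a point `P`: the points `Q` of the Fano plane with `ε P Q = 1`. -/
def Future (ε : V → V → ℤ) (P : V) : Set V := {Q : V | Q ≠ 0 ∧ Q ≠ P ∧ ε P Q = 1}

/-- The past of a point `P`: the points `Q` of the Fano plane with `ε P Q = −1`. -/
def Past (ε : V → V → ℤ) (P : V) : Set V := {Q : V | Q ≠ 0 ∧ Q ≠ P ∧ ε P Q = -1}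

/-- The composition conditions (C1) and (C2) on a multiplication factor. -/
def CompCond (ε : V → V → ℤ) : Prop :=
  (∀ P Q R : V, P ≠ 0 → Q ≠ 0 → R ≠ 0 → P ≠ Q → P ≠ R → Q ≠ R → P + Q + R = 0 →
    ε P Q * ε Q R = 1) ∧
  (∀ P Q R S : V, P ≠ 0 → Q ≠ 0 → R ≠ 0 → S ≠ 0 →
    P ≠ Q → P ≠ R → P ≠ S → Q ≠ R → Q ≠ S → R ≠ S → IsQuad {P, Q, R, S} →
    ε P Q * ε Q R * ε R S * ε S P = -1)

/-- An oriented triangle `{P,Q,R}`: one with `ε P Q = ε Q R = ε R P`. -/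
def OrientedTri (ε : V → V → ℤ) (T : Set V) : Prop :=
  ∃ P Q R : V, T = {P, Q, R} ∧ P ≠ Q ∧ P ≠ R ∧ Q ≠ R ∧
    ε P Q = ε Q R ∧ ε Q R = ε R P

/-- `P` is the distinguished point of the quadrilateral `S`: the point of `S` whose
complement in `S` is the oriented triangle of `S`. -/
def IsDistPt (ε : V → V → ℤ) (S : Set V) (P : V) : Prop :=
  P ∈ S ∧ IsTriangle (S \ {P}) ∧ OrientedTri ε (S \ {P})

/-- A family of subsets of the Fano plane satisfies the Fano axioms if two distinct points
lie in exactly one member and two distinct members meet in exactly one point. -/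
def FanoFamily (Δ : Set (Set V)) : Prop :=
  (∀ P Q : V, P ≠ 0 → Q ≠ 0 → P ≠ Q → ∃! T, T ∈ Δ ∧ P ∈ T ∧ Q ∈ T) ∧
  (∀ T₁ T₂ : Set V, T₁ ∈ Δ → T₂ ∈ Δ → T₁ ≠ T₂ → ∃! X : V, X ∈ T₁ ∩ T₂)

/-- An `n`-oriented map: `α_P(P) + n(P) = 1` on the Fano plane and
`α_P(Q) + α_Q(P) = 1` for distinct points; normalised by `α 0 = 0`. -/
def IsNOrientedMap (n : V →ₗ[ZMod 2] ZMod 2) (α : V → V →ₗ[ZMod 2] ZMod 2) : Prop :=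
  (∀ P : V, P ≠ 0 → α P P + n P = 1) ∧
  (∀ P Q : V, P ≠ 0 → Q ≠ 0 → P ≠ Q → α P Q + α Q P = 1) ∧
  α 0 = 0

/-- An oriented map is a `0`-oriented map. -/
def IsOrientedMap (α : V → V →ₗ[ZMod 2] ZMod 2) : Prop := IsNOrientedMap 0 α

/-- The exponential `e : ZMod 2 → {−1,1}`, `e^0 = 1`, `e^1 = −1`. -/
def eSign (x : ZMod 2) : ℤ := if x = 0 then 1 else -1

/-- The multiplication factor `e^α` associated to an (`n`-)oriented map `α`. -/
def expMap (α : V → V →ₗ[ZMod 2] ZMod 2) : V → V → ℤ :=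
  fun P Q => if P ≠ 0 ∧ Q ≠ 0 ∧ P ≠ Q then eSign (α P Q) else 0

/-- The set `Δ_P = {Q ∈ F : Q ≠ P, α_P(Q) = 1}` associated to an oriented map. -/
def DeltaSet (α : V → V →ₗ[ZMod 2] ZMod 2) (P : V) : Set V :=
  {Q : V | Q ≠ 0 ∧ Q ≠ P ∧ α P Q = 1}

/-- The map `α ↦ α′`, `α′_P = α_P + n(P)·n`. -/
def nTransform (n : V →ₗ[ZMod 2] ZMod 2) (α : V → V →ₗ[ZMod 2] ZMod 2) :
    V → V →ₗ[ZMod 2] ZMod 2 :=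
  fun P => α P + n P • n

/-- The norm `e^{n}` on the Fano plane associated to a linear form `n`. -/
def NormOf (n : V →ₗ[ZMod 2] ZMod 2) : V → ℤ := fun P => eSign (n P)

/-- Structure constants of the octonion-type multiplication on `O_F` determined by a norm `N`
and a multiplication factor `ε`: `e_0` is a two-sided unit, `e_P ⬝ e_P = −N(P) e_0` and
`e_P ⬝ e_Q = ε_{PQ} e_{P+Q}` for distinct points `P`, `Q` of the Fano plane. -/
def structC (𝔽 : Type*) [Field 𝔽] (N : V → ℤ) (ε : V → V → ℤ) (P Q : V) : 𝔽 :=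
  if P = 0 ∨ Q = 0 then 1
  else if P = Q then -(N P : 𝔽)
  else (ε P Q : 𝔽)

/-- The bilinear multiplication on `O_F = (V → 𝔽)` with the above structure constants
(in `V` we have `X = Y + Z ↔ Z = X + Y`). -/
def octMul (𝔽 : Type*) [Field 𝔽] (N : V → ℤ) (ε : V → V → ℤ) (Z W : V → 𝔽) : V → 𝔽 :=
  fun X => ∑ Y : V, structC 𝔽 N ε Y (X + Y) * Z Y * W (X + Y)

/-- The quadratic form `N_O` on `O_F`. -/
def octNorm (𝔽 : Type*) [Field 𝔽] (N : V → ℤ) (Z : V → 𝔽) : 𝔽 :=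
  ∑ X : V, (if X = 0 then 1 else (N X : 𝔽)) * Z X ^ 2

/-- `(O_F, N, ε)` is a composition algebra: `N_O(Z ⬝ W) = N_O(Z) N_O(W)`. -/
def IsCompAlg (𝔽 : Type*) [Field 𝔽] (N : V → ℤ) (ε : V → V → ℤ) : Prop :=
  ∀ Z W : V → 𝔽, octNorm 𝔽 N (octMul 𝔽 N ε Z W) = octNorm 𝔽 N Z * octNorm 𝔽 N W


section Aux

lemma zmod2_add_self (x : V) : x + x = 0 := by
  funext i
  have h : ∀ a : ZMod 2, a + a = 0 := by decide
  exact h (x i)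

lemma addP (P y : V) : P + (P + y) = y := by
  linear_combination zmod2_add_self P

lemma veq {x y : V} (h : x + y = 0) : x = y := by
  linear_combination h - zmod2_add_self y

lemma cardV : Fintype.card V = 8 := by decide

lemma cover8 (a0 a1 a2 a3 a4 a5 a6 a7 : V)
    (h01 : a0 ≠ a1) (h02 : a0 ≠ a2) (h03 : a0 ≠ a3) (h04 : a0 ≠ a4) (h05 : a0 ≠ a5)
    (h06 : a0 ≠ a6) (h07 : a0 ≠ a7)
    (h12 : a1 ≠ a2) (h13 : a1 ≠ a3) (h14 : a1 ≠ a4) (h15 : a1 ≠ a5) (h16 : a1 ≠ a6)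
    (h17 : a1 ≠ a7)
    (h23 : a2 ≠ a3) (h24 : a2 ≠ a4) (h25 : a2 ≠ a5) (h26 : a2 ≠ a6) (h27 : a2 ≠ a7)
    (h34 : a3 ≠ a4) (h35 : a3 ≠ a5) (h36 : a3 ≠ a6) (h37 : a3 ≠ a7)
    (h45 : a4 ≠ a5) (h46 : a4 ≠ a6) (h47 : a4 ≠ a7)
    (h56 : a5 ≠ a6) (h57 : a5 ≠ a7)
    (h67 : a6 ≠ a7) (x : V) :
    x = a0 ∨ x = a1 ∨ x = a2 ∨ x = a3 ∨ x = a4 ∨ x = a5 ∨ x = a6 ∨ x = a7 := by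
  by_contra hx
  push_neg at hx
  obtain ⟨g0, g1, g2, g3, g4, g5, g6, g7⟩ := hx
  have hnd : ([x, a0, a1, a2, a3, a4, a5, a6, a7] : List V).Nodup := by simp_all
  have hle := List.Nodup.length_le_card hnd
  rw [cardV] at hle
  simp at hle

lemma quad_nonzero {S : Set V} (hS : IsQuad S) : ∀ x ∈ S, x ≠ 0 := by
  obtain ⟨⟨p, q, r, t, hp, hq, hr, ht, _, _, _, _, _, _, hEq⟩, _⟩ := hS
  intro x hx
  rw [hEq] at hx
  simp only [Set.mem_insert_iff, Set.mem_singleton_iff] at hx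
  rcases hx with h | h | h | h <;> subst h <;> assumption

lemma line_flip (ε : V → V → ℤ) (hε : IsMulFactor ε) (hc : CompCond ε)
    {P U : V} (hP : P ≠ 0) (hU : U ≠ 0) (hne : P ≠ U) :
    ε P (P + U) = -ε P U := by
  have hPU0 : P + U ≠ 0 := fun h => hne (veq h)
  have hPUP : P + U ≠ P := fun h => hU (by linear_combination h)
  have hPUU : P + U ≠ U := fun h => hP (by linear_combination h)
  have t1 := hc.1 P U (P + U) hP hU hPU0 hne (Ne.symm hPUP) (Ne.symm hPUU)
    (zmod2_add_self (P + U))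
  have t2 := hc.1 U (P + U) P hU hPU0 hP (Ne.symm hPUU) (Ne.symm hne) hPUP
    (by linear_combination zmod2_add_self P + zmod2_add_self U)
  have hanti : ε (P + U) P = -ε P (P + U) := (hε.1 P (P + U) hP hPU0 (Ne.symm hPUP)).2
  rw [hanti] at t2
  rcases (hε.1 P U hP hU hne).1 with e1 | e1 <;>
    rcases (hε.1 U (P + U) hU hPU0 (Ne.symm hPUU)).1 with e2 | e2 <;>
    rcases (hε.1 P (P + U) hP hPU0 (Ne.symm hPUP)).1 with e3 | e3 <;>
    rw [e1, e2] at t1 <;> rw [e2, e3] at t2 <;> rw [e1, e3] <;> omega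

lemma dist_const (ε : V → V → ℤ) (hε : IsMulFactor ε) (hc : CompCond ε)
    (S : Set V) (hS : IsQuad S) (P : V) (h : IsDistPt ε S P) :
    ∀ U W : V, U ∈ S → W ∈ S → U ≠ P → W ≠ P → ε P U = ε P W := by
  obtain ⟨hPS, _, hOr⟩ := h
  obtain ⟨a, b, c, hT, hab, hac, hbc, ho1, ho2⟩ := hOr
  have haD : a ∈ S \ {P} := by rw [hT]; simp
  have hbD : b ∈ S \ {P} := by rw [hT]; simp
  have hcD : c ∈ S \ {P} := by rw [hT]; simp
  have haS := haD.1
  have hbS := hbD.1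
  have hcS := hcD.1
  have haP : a ≠ P := by simpa using haD.2
  have hbP : b ≠ P := by simpa using hbD.2
  have hcP : c ≠ P := by simpa using hcD.2
  have hP0 : P ≠ 0 := quad_nonzero hS P hPS
  have ha0 : a ≠ 0 := quad_nonzero hS a haS
  have hb0 : b ≠ 0 := quad_nonzero hS b hbS
  have hc0 : c ≠ 0 := quad_nonzero hS c hcS
  have hset : (insert P ({a, b, c} : Set V)) = S := by
    rw [← hT, Set.insert_diff_singleton, Set.insert_eq_self.mpr hPS]
  have hq1 : IsQuad ({P, a, b, c} : Set V) := by rw [show ({P, a, b, c} : Set V) = S from hset]; exact hS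
  have hq2 : IsQuad ({P, b, c, a} : Set V) := by
    rw [show ({P, b, c, a} : Set V) = S from by rw [← hset]; ext x; simp; tauto]; exact hS
  have c2a := hc.2 P a b c hP0 ha0 hb0 hc0 (Ne.symm haP) (Ne.symm hbP) (Ne.symm hcP)
    hab hac hbc hq1
  have c2b := hc.2 P b c a hP0 hb0 hc0 ha0 (Ne.symm hbP) (Ne.symm hcP) (Ne.symm haP)
    hbc (Ne.symm hab) (Ne.symm hac) hq2
  have hbc' : ε b c = ε a b := ho1.symm
  have hca' : ε c a = ε a b := ho2.symm.trans ho1.symm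
  have haP' : ε a P = -ε P a := (hε.1 P a hP0 ha0 (Ne.symm haP)).2
  have hcP' : ε c P = -ε P c := (hε.1 P c hP0 hc0 (Ne.symm hcP)).2
  rw [hbc', hcP'] at c2a
  rw [hbc', hca', haP'] at c2b
  have key : ε P a = ε P b ∧ ε P b = ε P c := by
    rcases (hε.1 P a hP0 ha0 (Ne.symm haP)).1 with e1 | e1 <;>
      rcases (hε.1 P b hP0 hb0 (Ne.symm hbP)).1 with e2 | e2 <;>
      rcases (hε.1 P c hP0 hc0 (Ne.symm hcP)).1 with e3 | e3 <;>
      rcases (hε.1 a b ha0 hb0 hab).1 with e4 | e4 <;>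
      rw [e1, e4, e3] at c2a <;> rw [e2, e4, e1] at c2b <;>
      rw [e1, e2, e3] <;> omega
  have k13 : ε P a = ε P c := key.1.trans key.2
  intro U W hU hW hUP hWP
  have hUm : U ∈ ({a, b, c} : Set V) := by
    rw [← hT]; exact ⟨hU, by simpa using hUP⟩
  have hWm : W ∈ ({a, b, c} : Set V) := by
    rw [← hT]; exact ⟨hW, by simpa using hWP⟩
  simp only [Set.mem_insert_iff, Set.mem_singleton_iff] at hUm hWm
  rcases hUm with h | h | h <;> rcases hWm with h' | h' | h' <;> subst h <;> subst h' <;>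
    first
      | rfl
      | exact key.1
      | exact key.2
      | exact key.1.symm
      | exact key.2.symm
      | exact k13
      | exact k13.symm

lemma dist_unique (ε : V → V → ℤ) (hε : IsMulFactor ε) (hc : CompCond ε)
    (S : Set V) (hS : IsQuad S) (P₁ P₂ : V)
    (h₁ : IsDistPt ε S P₁) (h₂ : IsDistPt ε S P₂) : P₁ = P₂ := by
  by_contra hne
  have hconst := dist_const ε hε hc S hS P₁ h₁
  obtain ⟨hP₂S, _, hOr⟩ := h₂
  obtain ⟨a, b, c, hT, hab, hac, hbc, ho1, ho2⟩ := hOr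
  have haD : a ∈ S \ {P₂} := by rw [hT]; simp
  have hbD : b ∈ S \ {P₂} := by rw [hT]; simp
  have hcD : c ∈ S \ {P₂} := by rw [hT]; simp
  have haS := haD.1
  have hbS := hbD.1
  have hcS := hcD.1
  have ha0 : a ≠ 0 := quad_nonzero hS a haS
  have hb0 : b ≠ 0 := quad_nonzero hS b hbS
  have hc0 : c ≠ 0 := quad_nonzero hS c hcS
  have hmem : P₁ ∈ ({a, b, c} : Set V) := by
    rw [← hT]; exact ⟨h₁.1, by simpa using hne⟩
  simp only [Set.mem_insert_iff, Set.mem_singleton_iff] at hmem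
  rcases hmem with h | h | h
  · -- P₁ = a
    have e1 : ε P₁ b = ε P₁ c := hconst b c hbS hcS
      (fun hh => hab (by rw [← h]; exact hh.symm))
      (fun hh => hac (by rw [← h]; exact hh.symm))
    rw [h] at e1
    have antis : ε c a = -ε a c := (hε.1 a c ha0 hc0 hac).2
    rw [← e1] at antis
    have final : ε a b = -ε a b := (ho1.trans ho2).trans antis
    rcases (hε.1 a b ha0 hb0 hab).1 with s | s <;> rw [s] at final <;> norm_num at final
  · -- P₁ = b
    have e1 : ε P₁ a = ε P₁ c := hconst a c haS hcS
      (fun hh => hab (by rw [← h]; exact hh))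
      (fun hh => hbc (by rw [← h]; exact hh.symm))
    rw [h] at e1
    have antis : ε a b = -ε b a := (hε.1 b a hb0 ha0 (Ne.symm hab)).2
    have t1 : ε b c = -ε b a := ho1.symm.trans antis
    rw [e1] at t1
    rcases (hε.1 b c hb0 hc0 hbc).1 with s | s <;> rw [s] at t1 <;> norm_num at t1
  · -- P₁ = c
    have e1 : ε P₁ a = ε P₁ b := hconst a b haS hbS
      (fun hh => hac (by rw [← h]; exact hh))
      (fun hh => hbc (by rw [← h]; exact hh))
    rw [h] at e1
    have antis : ε b c = -ε c b := (hε.1 c b hc0 hb0 (Ne.symm hbc)).2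
    have t1 : ε c a = -ε c b := ho2.symm.trans antis
    rw [← e1] at t1
    rcases (hε.1 c a hc0 ha0 (Ne.symm hac)).1 with s | s <;> rw [s] at t1 <;> norm_num at t1

set_option maxHeartbeats 1000000 in
lemma quad_unique (ε : V → V → ℤ) (hε : IsMulFactor ε) (hc : CompCond ε)
    (S₁ S₂ : Set V) (hS₁ : IsQuad S₁) (hS₂ : IsQuad S₂) (P : V)
    (h₁ : IsDistPt ε S₁ P) (h₂ : IsDistPt ε S₂ P) (hSne : S₁ ≠ S₂) : False := by
  have hconst₁ := dist_const ε hε hc S₁ hS₁ P h₁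
  have hconst₂ := dist_const ε hε hc S₂ hS₂ P h₂
  have hP0 : P ≠ 0 := quad_nonzero hS₁ P h₁.1
  obtain ⟨A, B, C, hA0, hB0, hC0, hAB, hAC, hBC, hsum₁, hset₁⟩ := h₁.2.1
  obtain ⟨D, E, G, hD0, hE0, hG0, hDE, hDG, hEG, hsum₂, hset₂⟩ := h₂.2.1
  have hAD : A ∈ S₁ \ {P} := by rw [hset₁]; simp
  have hBD : B ∈ S₁ \ {P} := by rw [hset₁]; simp
  have hCD : C ∈ S₁ \ {P} := by rw [hset₁]; simp
  have hDD : D ∈ S₂ \ {P} := by rw [hset₂]; simp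
  have hED : E ∈ S₂ \ {P} := by rw [hset₂]; simp
  have hGD : G ∈ S₂ \ {P} := by rw [hset₂]; simp
  have hAS := hAD.1
  have hBS := hBD.1
  have hCS := hCD.1
  have hDS := hDD.1
  have hES := hED.1
  have hGS := hGD.1
  have hAP : A ≠ P := by simpa using hAD.2
  have hBP : B ≠ P := by simpa using hBD.2
  have hCP : C ≠ P := by simpa using hCD.2
  have hDP : D ≠ P := by simpa using hDD.2
  have hEP : E ≠ P := by simpa using hED.2
  have hGP : G ≠ P := by simpa using hGD.2
  have hS₁eq : S₁ = insert P ({A, B, C} : Set V) := by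
    rw [← hset₁, Set.insert_diff_singleton, Set.insert_eq_self.mpr h₁.1]
  have hS₂eq : S₂ = insert P ({D, E, G} : Set V) := by
    rw [← hset₂, Set.insert_diff_singleton, Set.insert_eq_self.mpr h₂.1]
  have hpair₁ : ∀ u w : V, u ∈ S₁ → w ∈ S₁ → u ≠ P → w ≠ P → w = P + u → False := by
    intro u w hu hw huP hwP he
    have h1 : ε P u = ε P w := hconst₁ u w hu hw huP hwP
    rw [he, line_flip ε hε hc hP0 (quad_nonzero hS₁ u hu) (Ne.symm huP)] at h1
    rcases (hε.1 P u hP0 (quad_nonzero hS₁ u hu) (Ne.symm huP)).1 with s | s <;>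
      rw [s] at h1 <;> norm_num at h1
  by_cases hX : ∃ X, X ∈ S₁ ∧ X ∈ S₂ ∧ X ≠ P
  · -- Case A
    obtain ⟨X, hXS₁, hXS₂, hXP⟩ := hX
    have hs : ∀ w, w ∈ S₂ → w ≠ P → ε P w = ε P A := fun w hw hwP =>
      (hconst₂ w X hw hXS₂ hwP hXP).trans (hconst₁ X A hXS₁ hAS hXP hAP)
    have hsB : ε P B = ε P A := hconst₁ B A hBS hAS hBP hAP
    have hsC : ε P C = ε P A := hconst₁ C A hCS hAS hCP hAP
    have hgood : ∀ u w : V, ε P u = ε P A → ε P w = ε P A → u ≠ 0 → u ≠ P →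
        w = P + u → False := by
      intro u w hu hw hu0 huP he
      have hl := line_flip ε hε hc hP0 hu0 (Ne.symm huP)
      rw [← he, hu, hw] at hl
      rcases (hε.1 P A hP0 hA0 (Ne.symm hAP)).1 with s | s <;> rw [s] at hl <;>
        norm_num at hl
    have main : ∀ W : V, W ≠ 0 → W ≠ P → W ≠ A → W ≠ B → W ≠ C → ε P W = ε P A →
        False := by
      intro W hW0 hWP hWA hWB hWC hsW
      have hnBA : B ≠ P + A := fun h => hgood A B rfl hsB hA0 hAP h
      have hnCA : C ≠ P + A := fun h => hgood A C rfl hsC hA0 hAP h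
      have hnWA : W ≠ P + A := fun h => hgood A W rfl hsW hA0 hAP h
      have hnCB : C ≠ P + B := fun h => hgood B C hsB hsC hB0 hBP h
      have hnWB : W ≠ P + B := fun h => hgood B W hsB hsW hB0 hBP h
      have hnWC : W ≠ P + C := fun h => hgood C W hsC hsW hC0 hCP h
      have cov := cover8 0 P A B C W (P + A) (P + B)
        (Ne.symm hP0) (Ne.symm hA0) (Ne.symm hB0) (Ne.symm hC0) (Ne.symm hW0)
        (fun h => hAP (veq h.symm).symm) (fun h => hBP (veq h.symm).symm)
        (Ne.symm hAP) (Ne.symm hBP) (Ne.symm hCP) (Ne.symm hWP)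
        (fun h => hA0 (by linear_combination h.symm))
        (fun h => hB0 (by linear_combination h.symm))
        hAB hAC (Ne.symm hWA)
        (fun h => hP0 (by linear_combination h.symm))
        (fun h => hnBA (by rw [h, addP]))
        hBC (Ne.symm hWB)
        hnBA
        (fun h => hP0 (by linear_combination h.symm))
        (Ne.symm hWC)
        hnCA hnCB
        hnWA hnWB
        (fun h => hAB (by linear_combination h))
        (P + C)
      rcases cov with h | h | h | h | h | h | h | h
      · exact hCP (veq h).symm
      · exact hC0 (by linear_combination h)
      · exact hnCA (by rw [← h, addP])
      · exact hnCB (by rw [← h, addP])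
      · exact hP0 (by linear_combination h)
      · exact hnWC h.symm
      · exact hAC (show A = C by linear_combination h.symm)
      · exact hBC (show B = C by linear_combination h.symm)
    by_cases hd : D = A ∨ D = B ∨ D = C
    · by_cases he : E = A ∨ E = B ∨ E = C
      · by_cases hg : G = A ∨ G = B ∨ G = C
        · rcases hd with h | h | h <;> rcases he with h' | h' | h' <;>
            rcases hg with h'' | h'' | h'' <;>
            first
              | exact hDE (h.trans h'.symm)
              | exact hDG (h.trans h''.symm)
              | exact hEG (h'.trans h''.symm)
              | exact hSne (by
                  rw [hS₁eq, hS₂eq, h, h', h'']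
                  all_goals (ext x; simp only [Set.mem_insert_iff, Set.mem_singleton_iff]; tauto))
        · push_neg at hg
          exact main G hG0 hGP hg.1 hg.2.1 hg.2.2 (hs G hGS hGP)
      · push_neg at he
        exact main E hE0 hEP he.1 he.2.1 he.2.2 (hs E hES hEP)
    · push_neg at hd
      exact main D hD0 hDP hd.1 hd.2.1 hd.2.2 (hs D hDS hDP)
  · -- Case B
    push_neg at hX
    have hAD' : A ≠ D := fun h => hAP (hX A hAS (by rw [h]; exact hDS))
    have hAE' : A ≠ E := fun h => hAP (hX A hAS (by rw [h]; exact hES))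
    have hAG' : A ≠ G := fun h => hAP (hX A hAS (by rw [h]; exact hGS))
    have hBD' : B ≠ D := fun h => hBP (hX B hBS (by rw [h]; exact hDS))
    have hBE' : B ≠ E := fun h => hBP (hX B hBS (by rw [h]; exact hES))
    have hBG' : B ≠ G := fun h => hBP (hX B hBS (by rw [h]; exact hGS))
    have hCD' : C ≠ D := fun h => hCP (hX C hCS (by rw [h]; exact hDS))
    have hCE' : C ≠ E := fun h => hCP (hX C hCS (by rw [h]; exact hES))
    have hCG' : C ≠ G := fun h => hCP (hX C hCS (by rw [h]; exact hGS))
    have cov := cover8 0 P A B C D E G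
      (Ne.symm hP0) (Ne.symm hA0) (Ne.symm hB0) (Ne.symm hC0) (Ne.symm hD0)
      (Ne.symm hE0) (Ne.symm hG0)
      (Ne.symm hAP) (Ne.symm hBP) (Ne.symm hCP) (Ne.symm hDP) (Ne.symm hEP)
      (Ne.symm hGP)
      hAB hAC hAD' hAE' hAG'
      hBC hBD' hBE' hBG'
      hCD' hCE' hCG'
      hDE hDG
      hEG
    have habm : A + B = D ∨ A + B = E ∨ A + B = G := by
      rcases cov (A + B) with h | h | h | h | h | h | h | h
      · exact absurd (veq h) hAB
      · exact (hpair₁ A B hAS hBS hAP hBP (by linear_combination h - zmod2_add_self A)).elim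
      · exact absurd (show B = 0 by linear_combination h) hB0
      · exact absurd (show A = 0 by linear_combination h) hA0
      · exact absurd (show A + B + C = 0 by linear_combination h + zmod2_add_self C) hsum₁
      · exact Or.inl h
      · exact Or.inr (Or.inl h)
      · exact Or.inr (Or.inr h)
    have hacm : A + C = D ∨ A + C = E ∨ A + C = G := by
      rcases cov (A + C) with h | h | h | h | h | h | h | h
      · exact absurd (veq h) hAC
      · exact (hpair₁ A C hAS hCS hAP hCP (by linear_combination h - zmod2_add_self A)).elim
      · exact absurd (show C = 0 by linear_combination h) hC0
      · exact absurd (show A + B + C = 0 by linear_combination h + zmod2_add_self B) hsum₁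
      · exact absurd (show A = 0 by linear_combination h) hA0
      · exact Or.inl h
      · exact Or.inr (Or.inl h)
      · exact Or.inr (Or.inr h)
    have hbcm : B + C = D ∨ B + C = E ∨ B + C = G := by
      rcases cov (B + C) with h | h | h | h | h | h | h | h
      · exact absurd (veq h) hBC
      · exact (hpair₁ B C hBS hCS hBP hCP (by linear_combination h - zmod2_add_self B)).elim
      · exact absurd (show A + B + C = 0 by linear_combination h + zmod2_add_self A) hsum₁
      · exact absurd (show C = 0 by linear_combination h) hC0
      · exact absurd (show B = 0 by linear_combination h) hB0
      · exact Or.inl h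
      · exact Or.inr (Or.inl h)
      · exact Or.inr (Or.inr h)
    rcases habm with h1 | h1 | h1 <;> rcases hacm with h2 | h2 | h2 <;>
      rcases hbcm with h3 | h3 | h3 <;>
      first
        | exact hsum₂ (by linear_combination -h1 - h2 - h3 + zmod2_add_self A +
            zmod2_add_self B + zmod2_add_self C)
        | exact hBC (by linear_combination h1 - h2)
        | exact hAC (by linear_combination h1 - h3)
        | exact hAB (by linear_combination h2 - h3)

end Aux

/-- under the composition conditions, two quadrilaterals are equal iff their
distinguished points are equal. -/
theorem stmt_4 (ε : V → V → ℤ) (hε : IsMulFactor ε) (hc : CompCond ε)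
    (S₁ S₂ : Set V) (hS₁ : IsQuad S₁) (hS₂ : IsQuad S₂)
    (P₁ P₂ : V) (h₁ : IsDistPt ε S₁ P₁) (h₂ : IsDistPt ε S₂ P₂) :
    S₁ = S₂ ↔ P₁ = P₂ := by
  constructor
  · intro h
    subst h
    exact dist_unique ε hε hc S₁ hS₁ P₁ P₂ h₁ h₂
  · intro h
    subst h
    by_contra hSne
    exact quad_unique ε hε hc S₁ S₂ hS₁ hS₂ P₁ h₁ h₂ hSne
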